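/- For any two policies π' and π, with ε^{π'} = max_s |E_{a∼π'(·|s)}[A^π(s,a)]|, the following lower bound holds: J(π') - J(π) ≥ (1/(1-γ)) · E_{s∼d^π, a∼π'(·|s)}[A^π(s,a) - (2γ ε^{π'}/(1-γ)) D_TV(π'‖π)[s]]. -/

import Mathlib

open BigOperators Finset Matrix

noncomputable section

variable {S A : Type*}

/-- Policy transition matrix (column-stochastic): entry `(s', s)` is
`P_pol(s'|s) = ∑ a, P(s'|s,a) pol(a|s)`. -/
def Pmat [Fintype A] (P : S → A → S → ℝ) (pol : S → A → ℝ) : Matrix S S ℝ :=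
  fun s' s => ∑ a, P s a s' * pol s a

/-- Discounted future state distribution `d^π = (1-γ) ∑_t γ^t P_π^t μ`. -/
def dFut [Fintype S] [DecidableEq S] [Fintype A] (γ : ℝ) (P : S → A → S → ℝ)
    (μ : S → ℝ) (pol : S → A → ℝ) : S → ℝ :=
  fun s => (1 - γ) * ∑' t : ℕ, γ ^ t * ((Pmat P pol ^ t) *ᵥ μ) s

/-- Discounted return `J(π)` (also used as the cost return `J_C(π)` with a cost `C`
in place of the reward `R`). -/
def Jret [Fintype S] [DecidableEq S] [Fintype A] (γ : ℝ) (P : S → A → S → ℝ)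
    (R : S → A → S → ℝ) (μ : S → ℝ) (pol : S → A → ℝ) : ℝ :=
  (1 / (1 - γ)) * ∑ s, dFut γ P μ pol s * (∑ a, pol s a * (∑ s', P s a s' * R s a s'))

/-- Total variational divergence between action distributions at state `s`. -/
def DTV [Fintype A] (pol' pol : S → A → ℝ) (s : S) : ℝ :=
  (1 / 2) * ∑ a, |pol' s a - pol s a|

/-- Kullback–Leibler divergence between action distributions at state `s`. -/
def DKL [Fintype A] (pol' pol : S → A → ℝ) (s : S) : ℝ :=
  ∑ a, pol' s a * Real.log (pol' s a / pol s a)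

/-- Advantage function `A^π(s,a) = Q^π(s,a) - V^π(s)` built from a value function `V`
(also used for cost advantages with a cost `C` in place of `R`). -/
def Adv [Fintype S] (γ : ℝ) (P : S → A → S → ℝ) (R : S → A → S → ℝ)
    (V : S → ℝ) (s : S) (a : A) : ℝ :=
  (∑ s', P s a s' * (R s a s' + γ * V s')) - V s

/-- `ε_f^{π'} = max_s |E_{a∼π'(·|s), s'∼P}[δ_f(s,a,s')]|` where
`δ_f(s,a,s') = R(s,a,s') + γ f(s') - f(s)`. -/
def epsF [Fintype S] [Fintype A] (γ : ℝ) (P : S → A → S → ℝ) (R : S → A → S → ℝ)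
    (f : S → ℝ) (pol' : S → A → ℝ) : ℝ :=
  ⨆ s, |∑ a, pol' s a * (∑ s', P s a s' * (R s a s' + γ * f s' - f s))|

/-- Surrogate `L_{π,f}(π') = E_{s∼d^π, a∼π, s'∼P}[(π'(a|s)/π(a|s) - 1) δ_f(s,a,s')]`. -/
def Lsurr [Fintype S] [DecidableEq S] [Fintype A] (γ : ℝ) (P : S → A → S → ℝ)
    (R : S → A → S → ℝ) (μ : S → ℝ) (f : S → ℝ) (pol pol' : S → A → ℝ) : ℝ :=
  ∑ s, dFut γ P μ pol s * (∑ a, pol s a * (∑ s', P s a s' *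
    ((pol' s a / pol s a - 1) * (R s a s' + γ * f s' - f s))))


section helper

variable [Fintype S] [DecidableEq S] [Fintype A]

lemma pow_entry_nonneg {M : Matrix S S ℝ} (hM0 : ∀ s' s, 0 ≤ M s' s) :
    ∀ (t : ℕ) (s' s : S), 0 ≤ (M ^ t) s' s := by
  intro t
  induction t with
  | zero => intro s' s; simp [Matrix.one_apply]; positivity
  | succ t ih =>
    intro s' s
    rw [pow_succ, Matrix.mul_apply]
    exact Finset.sum_nonneg fun k _ => mul_nonneg (ih _ _) (hM0 _ _)

lemma pow_colsum {M : Matrix S S ℝ} (hM1 : ∀ s, ∑ s', M s' s = 1) :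
    ∀ (t : ℕ) (s : S), ∑ s', (M ^ t) s' s = 1 := by
  intro t
  induction t with
  | zero => intro s; simp [Matrix.one_apply]
  | succ t ih =>
    intro s
    simp_rw [pow_succ, Matrix.mul_apply]
    rw [Finset.sum_comm]
    simp_rw [← Finset.sum_mul, ih]
    simp [hM1 s]

lemma pow_entry_le_one {M : Matrix S S ℝ} (hM0 : ∀ s' s, 0 ≤ M s' s)
    (hM1 : ∀ s, ∑ s', M s' s = 1) (t : ℕ) (s' s : S) : (M ^ t) s' s ≤ 1 := by
  calc (M ^ t) s' s ≤ ∑ s'', (M ^ t) s'' s :=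
        Finset.single_le_sum (fun i _ => pow_entry_nonneg hM0 t i s) (Finset.mem_univ s')
    _ = 1 := pow_colsum hM1 t s

lemma mulVec_pow_nonneg {M : Matrix S S ℝ} (hM0 : ∀ s' s, 0 ≤ M s' s)
    {μ : S → ℝ} (hμ0 : ∀ s, 0 ≤ μ s) (t : ℕ) (s : S) : 0 ≤ ((M ^ t) *ᵥ μ) s :=
  Finset.sum_nonneg fun k _ => mul_nonneg (pow_entry_nonneg hM0 t s k) (hμ0 k)

lemma mulVec_pow_le_one {M : Matrix S S ℝ} (hM0 : ∀ s' s, 0 ≤ M s' s)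
    (hM1 : ∀ s, ∑ s', M s' s = 1)
    {μ : S → ℝ} (hμ0 : ∀ s, 0 ≤ μ s) (hμ1 : ∑ s, μ s = 1) (t : ℕ) (s : S) :
    ((M ^ t) *ᵥ μ) s ≤ 1 := by
  calc ((M ^ t) *ᵥ μ) s = ∑ k, (M ^ t) s k * μ k := rfl
    _ ≤ ∑ k, 1 * μ k := Finset.sum_le_sum fun k _ =>
        mul_le_mul_of_nonneg_right (pow_entry_le_one hM0 hM1 t s k) (hμ0 k)
    _ = 1 := by simp [hμ1]

lemma summable_geo {M : Matrix S S ℝ} (hM0 : ∀ s' s, 0 ≤ M s' s)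
    (hM1 : ∀ s, ∑ s', M s' s = 1)
    {μ : S → ℝ} (hμ0 : ∀ s, 0 ≤ μ s) (hμ1 : ∑ s, μ s = 1)
    {γ : ℝ} (hγ0 : 0 ≤ γ) (hγ1 : γ < 1) (s : S) :
    Summable (fun t : ℕ => γ ^ t * ((M ^ t) *ᵥ μ) s) := by
  apply Summable.of_nonneg_of_le
    (fun t => mul_nonneg (pow_nonneg hγ0 t) (mulVec_pow_nonneg hM0 hμ0 t s))
    (fun t => ?_) (summable_geometric_of_lt_one hγ0 hγ1)
  calc γ ^ t * ((M ^ t) *ᵥ μ) s ≤ γ ^ t * 1 :=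
        mul_le_mul_of_nonneg_left (mulVec_pow_le_one hM0 hM1 hμ0 hμ1 t s) (pow_nonneg hγ0 t)
    _ = γ ^ t := mul_one _

end helper

section rec

variable [Fintype S] [DecidableEq S] [Fintype A]
variable {γ : ℝ} {P : S → A → S → ℝ} {μ : S → ℝ} {pol : S → A → ℝ}

lemma Pmat_nonneg (hP0 : ∀ s a s', 0 ≤ P s a s') (hpol0 : ∀ s a, 0 ≤ pol s a)
    (s' s : S) : 0 ≤ Pmat P pol s' s :=
  Finset.sum_nonneg fun a _ => mul_nonneg (hP0 _ _ _) (hpol0 _ _)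

lemma Pmat_colsum (hP1 : ∀ s a, (∑ s', P s a s') = 1) (hpol1 : ∀ s, (∑ a, pol s a) = 1)
    (s : S) : ∑ s', Pmat P pol s' s = 1 := by
  unfold Pmat
  rw [Finset.sum_comm]
  simp_rw [← Finset.sum_mul, hP1]
  simp [hpol1 s]

lemma dFut_rec (hγ0 : 0 ≤ γ) (hγ1 : γ < 1)
    (hP0 : ∀ s a s', 0 ≤ P s a s') (hP1 : ∀ s a, (∑ s', P s a s') = 1)
    (hμ0 : ∀ s, 0 ≤ μ s) (hμ1 : ∑ s, μ s = 1)
    (hpol0 : ∀ s a, 0 ≤ pol s a) (hpol1 : ∀ s, (∑ a, pol s a) = 1) (s : S) :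
    dFut γ P μ pol s = (1 - γ) * μ s + γ * ((Pmat P pol) *ᵥ (dFut γ P μ pol)) s := by
  have hM0 := Pmat_nonneg hP0 hpol0
  have hM1 := Pmat_colsum hP1 hpol1
  set M := Pmat P pol with hM
  have hsum : ∀ s₂ : S, Summable (fun t : ℕ => γ ^ t * ((M ^ t) *ᵥ μ) s₂) :=
    fun s₂ => summable_geo hM0 hM1 hμ0 hμ1 hγ0 hγ1 s₂
  have key : (∑' t : ℕ, γ ^ t * ((M ^ t) *ᵥ μ) s)
      = μ s + γ * ∑ s₂, M s s₂ * ∑' t : ℕ, γ ^ t * ((M ^ t) *ᵥ μ) s₂ := by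
    rw [Summable.tsum_eq_zero_add (hsum s)]
    simp only [pow_zero, Matrix.one_mulVec, one_mul]
    congr 1
    have step : ∀ t : ℕ, γ ^ (t + 1) * ((M ^ (t + 1)) *ᵥ μ) s
        = γ * ∑ s₂, M s s₂ * (γ ^ t * ((M ^ t) *ᵥ μ) s₂) := by
      intro t
      have hMp : (M ^ (t+1)) *ᵥ μ = M *ᵥ ((M ^ t) *ᵥ μ) := by
        rw [Matrix.mulVec_mulVec, ← pow_succ']
      rw [hMp]
      have : (M *ᵥ ((M ^ t) *ᵥ μ)) s = ∑ s₂, M s s₂ * ((M ^ t) *ᵥ μ) s₂ := rfl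
      rw [this, Finset.mul_sum, pow_succ, Finset.mul_sum]
      congr 1; ext s₂; ring
    simp_rw [step]
    rw [tsum_mul_left]
    congr 1
    rw [Summable.tsum_finsetSum (fun s₂ _ => (hsum s₂).mul_left (M s s₂))]
    simp_rw [tsum_mul_left]
  unfold dFut
  rw [key]
  have : (M *ᵥ fun s₂ => (1 - γ) * ∑' t : ℕ, γ ^ t * ((M ^ t) *ᵥ μ) s₂) s
      = (1 - γ) * ∑ s₂, M s s₂ * ∑' t : ℕ, γ ^ t * ((M ^ t) *ᵥ μ) s₂ := by
    simp only [Matrix.mulVec, dotProduct]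
    rw [Finset.mul_sum]; congr 1; ext s₂; ring
  rw [this]; ring

lemma dFut_nonneg (hγ1 : γ ≤ 1)
    (hP0 : ∀ s a s', 0 ≤ P s a s') (hγ0 : 0 ≤ γ)
    (hμ0 : ∀ s, 0 ≤ μ s) (hpol0 : ∀ s a, 0 ≤ pol s a) (s : S) :
    0 ≤ dFut γ P μ pol s := by
  have hM0 := Pmat_nonneg hP0 hpol0
  exact mul_nonneg (by linarith) (tsum_nonneg fun t =>
    mul_nonneg (pow_nonneg hγ0 t) (mulVec_pow_nonneg hM0 hμ0 t s))

end rec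


section pdl

variable [Fintype S] [DecidableEq S] [Fintype A]
variable {γ : ℝ} {P : S → A → S → ℝ} {μ : S → ℝ}

set_option linter.unusedSectionVars false

/-- Expansion of the expected advantage under policy `q`. -/
lemma adv_expand (hP1 : ∀ s a, (∑ s', P s a s') = 1)
    {q : S → A → ℝ} (hq1 : ∀ s, (∑ a, q s a) = 1) (R : S → A → S → ℝ) (V : S → ℝ) (s : S) :
    ∑ a, q s a * Adv γ P R V s a
      = (∑ a, q s a * ∑ s', P s a s' * R s a s')
        + γ * ∑ s', Pmat P q s' s * V s' - V s := by
  have h1 : ∑ a, q s a * Adv γ P R V s a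
      = (∑ a, q s a * ∑ s', P s a s' * (R s a s' + γ * V s')) - V s := by
    simp only [Adv, mul_sub]
    rw [Finset.sum_sub_distrib, ← Finset.sum_mul, hq1 s, one_mul]
  rw [h1]
  congr 1
  have h2 : ∀ a, q s a * ∑ s', P s a s' * (R s a s' + γ * V s')
      = q s a * (∑ s', P s a s' * R s a s')
        + ∑ s', γ * (P s a s' * q s a * V s') := by
    intro a
    simp only [Finset.mul_sum]
    rw [← Finset.sum_add_distrib]
    exact Finset.sum_congr rfl fun s' _ => by ring
  simp_rw [h2]
  rw [Finset.sum_add_distrib]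
  congr 1
  rw [Finset.sum_comm, Finset.mul_sum]
  refine Finset.sum_congr rfl fun s' _ => ?_
  unfold Pmat
  rw [Finset.sum_mul, Finset.mul_sum]

/-- Performance difference lemma (one-policy form). -/
lemma pdl (hγ0 : 0 ≤ γ) (hγ1 : γ < 1)
    (hP0 : ∀ s a s', 0 ≤ P s a s') (hP1 : ∀ s a, (∑ s', P s a s') = 1)
    (hμ0 : ∀ s, 0 ≤ μ s) (hμ1 : ∑ s, μ s = 1) (R : S → A → S → ℝ)
    {q : S → A → ℝ} (hq0 : ∀ s a, 0 ≤ q s a) (hq1 : ∀ s, (∑ a, q s a) = 1)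
    (V : S → ℝ) :
    ∑ s, dFut γ P μ q s * (∑ a, q s a * Adv γ P R V s a)
      = (1 - γ) * Jret γ P R μ q - (1 - γ) * ∑ s, μ s * V s := by
  have hne : (1 : ℝ) - γ ≠ 0 := by linarith
  set d := dFut γ P μ q with hd
  set M := Pmat P q with hM
  have hrec : ∀ s, d s = (1 - γ) * μ s + γ * (M *ᵥ d) s :=
    fun s => dFut_rec hγ0 hγ1 hP0 hP1 hμ0 hμ1 hq0 hq1 s
  simp_rw [adv_expand hP1 hq1 R V]
  have hsplit : ∀ s : S, d s * ((∑ a, q s a * ∑ s', P s a s' * R s a s')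
      + γ * ∑ s', M s' s * V s' - V s)
      = d s * (∑ a, q s a * ∑ s', P s a s' * R s a s')
        + d s * (γ * ∑ s', M s' s * V s') - d s * V s := by
    intro s; ring
  rw [Finset.sum_congr rfl fun s _ => hsplit s]
  rw [Finset.sum_sub_distrib, Finset.sum_add_distrib]
  have hmid : ∑ s, d s * (γ * ∑ s', M s' s * V s')
      = ∑ s', (γ * (M *ᵥ d) s') * V s' := by
    have hL : ∀ s : S, d s * (γ * ∑ s', M s' s * V s')
        = ∑ s', γ * (M s' s * d s) * V s' := by
      intro s
      rw [Finset.mul_sum, Finset.mul_sum]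
      exact Finset.sum_congr rfl fun s' _ => by ring
    have hR : ∀ s' : S, (γ * (M *ᵥ d) s') * V s'
        = ∑ s, γ * (M s' s * d s) * V s' := by
      intro s'
      have h : (M *ᵥ d) s' = ∑ s, M s' s * d s := rfl
      rw [h, Finset.mul_sum, Finset.sum_mul]
    simp_rw [hL, hR]
    exact Finset.sum_comm
  have hmid2 : ∑ s', (γ * (M *ᵥ d) s') * V s'
      = ∑ s', d s' * V s' - (1 - γ) * ∑ s', μ s' * V s' := by
    rw [Finset.mul_sum, ← Finset.sum_sub_distrib]
    refine Finset.sum_congr rfl fun s' _ => ?_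
    rw [hrec s']
    ring
  rw [hmid, hmid2]
  have hJ : (1 - γ) * Jret γ P R μ q
      = ∑ s, d s * (∑ a, q s a * ∑ s', P s a s' * R s a s') := by
    unfold Jret
    rw [← mul_assoc, mul_one_div, div_self hne, one_mul]
  rw [hJ]
  ring

end pdl

section tv

variable [Fintype S] [DecidableEq S] [Fintype A]
variable {γ : ℝ} {P : S → A → S → ℝ} {μ : S → ℝ}

set_option linter.unusedSectionVars false

lemma l1_contract {M : Matrix S S ℝ} (hM0 : ∀ s' s, 0 ≤ M s' s)
    (hM1 : ∀ s, ∑ s', M s' s = 1) (x : S → ℝ) :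
    ∑ s', |(M *ᵥ x) s'| ≤ ∑ s, |x s| := by
  calc ∑ s', |(M *ᵥ x) s'| ≤ ∑ s', ∑ s, M s' s * |x s| := by
        refine Finset.sum_le_sum fun s' _ => ?_
        have h : (M *ᵥ x) s' = ∑ s, M s' s * x s := rfl
        rw [h]
        refine (Finset.abs_sum_le_sum_abs _ _).trans ?_
        refine Finset.sum_le_sum fun s _ => ?_
        rw [abs_mul, abs_of_nonneg (hM0 s' s)]
    _ = ∑ s, (∑ s', M s' s) * |x s| := by
        rw [Finset.sum_comm]
        exact Finset.sum_congr rfl fun s _ => (Finset.sum_mul _ _ _).symm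
    _ = ∑ s, |x s| := by simp_rw [hM1, one_mul]

lemma shift_bound (hγ0 : 0 ≤ γ) (hγ1 : γ < 1)
    (hP0 : ∀ s a s', 0 ≤ P s a s') (hP1 : ∀ s a, (∑ s', P s a s') = 1)
    (hμ0 : ∀ s, 0 ≤ μ s) (hμ1 : ∑ s, μ s = 1)
    {pol pol' : S → A → ℝ}
    (hpol0 : ∀ s a, 0 ≤ pol s a) (hpol1 : ∀ s, (∑ a, pol s a) = 1)
    (hpol'0 : ∀ s a, 0 ≤ pol' s a) (hpol'1 : ∀ s, (∑ a, pol' s a) = 1) :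
    (1 - γ) * ∑ s, |dFut γ P μ pol' s - dFut γ P μ pol s|
      ≤ γ * (2 * ∑ s, dFut γ P μ pol s * DTV pol' pol s) := by
  set d := dFut γ P μ pol with hdd
  set d' := dFut γ P μ pol' with hdd'
  set M := Pmat P pol with hMM
  set M' := Pmat P pol' with hMM'
  have hd0 : ∀ s, 0 ≤ d s := fun s => dFut_nonneg hγ1.le hP0 hγ0 hμ0 hpol0 s
  have hrec : ∀ s, d s = (1 - γ) * μ s + γ * (M *ᵥ d) s :=
    fun s => dFut_rec hγ0 hγ1 hP0 hP1 hμ0 hμ1 hpol0 hpol1 s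
  have hrec' : ∀ s, d' s = (1 - γ) * μ s + γ * (M' *ᵥ d') s :=
    fun s => dFut_rec hγ0 hγ1 hP0 hP1 hμ0 hμ1 hpol'0 hpol'1 s
  have hpt : ∀ s, d' s - d s
      = γ * ((M' *ᵥ (fun u => d' u - d u)) s + ((M' - M) *ᵥ d) s) := by
    intro s
    have h1 : (M' *ᵥ (fun u => d' u - d u)) s = (M' *ᵥ d') s - (M' *ᵥ d) s := by
      simp [Matrix.mulVec, dotProduct, mul_sub, Finset.sum_sub_distrib]
    have h2 : ((M' - M) *ᵥ d) s = (M' *ᵥ d) s - (M *ᵥ d) s := by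
      simp [Matrix.sub_mulVec]
    rw [h1, h2, hrec' s, hrec s]
    ring
  have hB : ∑ s', |((M' - M) *ᵥ d) s'| ≤ 2 * ∑ s, d s * DTV pol' pol s := by
    have hstep : ∀ s' : S, |((M' - M) *ᵥ d) s'| ≤ ∑ s, |M' s' s - M s' s| * d s := by
      intro s'
      have h : ((M' - M) *ᵥ d) s' = ∑ s, (M' s' s - M s' s) * d s := by
        simp [Matrix.mulVec, dotProduct, Matrix.sub_apply]
      rw [h]
      refine (Finset.abs_sum_le_sum_abs _ _).trans ?_
      refine Finset.sum_le_sum fun s _ => ?_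
      rw [abs_mul, abs_of_nonneg (hd0 s)]
    calc ∑ s', |((M' - M) *ᵥ d) s'| ≤ ∑ s', ∑ s, |M' s' s - M s' s| * d s :=
          Finset.sum_le_sum fun s' _ => hstep s'
      _ = ∑ s, (∑ s', |M' s' s - M s' s|) * d s := by
          rw [Finset.sum_comm]
          exact Finset.sum_congr rfl fun s _ => (Finset.sum_mul _ _ _).symm
      _ ≤ ∑ s, (2 * DTV pol' pol s) * d s := by
          refine Finset.sum_le_sum fun s _ => ?_
          refine mul_le_mul_of_nonneg_right ?_ (hd0 s)
          have hrow : ∀ s' : S, |M' s' s - M s' s|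
              ≤ ∑ a, P s a s' * |pol' s a - pol s a| := by
            intro s'
            have h : M' s' s - M s' s = ∑ a, P s a s' * (pol' s a - pol s a) := by
              simp [hMM, hMM', Pmat, mul_sub, Finset.sum_sub_distrib]
            rw [h]
            refine (Finset.abs_sum_le_sum_abs _ _).trans ?_
            refine Finset.sum_le_sum fun a _ => ?_
            rw [abs_mul, abs_of_nonneg (hP0 s a s')]
          calc ∑ s', |M' s' s - M s' s|
              ≤ ∑ s', ∑ a, P s a s' * |pol' s a - pol s a| :=
                Finset.sum_le_sum fun s' _ => hrow s'
            _ = ∑ a, (∑ s', P s a s') * |pol' s a - pol s a| := by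
                rw [Finset.sum_comm]
                exact Finset.sum_congr rfl fun a _ => (Finset.sum_mul _ _ _).symm
            _ = ∑ a, |pol' s a - pol s a| := by simp_rw [hP1, one_mul]
            _ = 2 * DTV pol' pol s := by rw [DTV]; ring
      _ = 2 * ∑ s, d s * DTV pol' pol s := by
          rw [Finset.mul_sum]
          exact Finset.sum_congr rfl fun s _ => by ring
  have hcontr : ∑ s, |(M' *ᵥ (fun u => d' u - d u)) s| ≤ ∑ s, |d' s - d s| :=
    l1_contract (Pmat_nonneg hP0 hpol'0) (Pmat_colsum hP1 hpol'1) _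
  have hmain : ∑ s, |d' s - d s|
      ≤ γ * ∑ s, |d' s - d s| + γ * (2 * ∑ s, d s * DTV pol' pol s) := by
    calc ∑ s, |d' s - d s|
        = ∑ s, γ * |(M' *ᵥ (fun u => d' u - d u)) s + ((M' - M) *ᵥ d) s| := by
          refine Finset.sum_congr rfl fun s _ => ?_
          rw [hpt s, abs_mul, abs_of_nonneg hγ0]
      _ ≤ ∑ s, γ * (|(M' *ᵥ (fun u => d' u - d u)) s| + |((M' - M) *ᵥ d) s|) := by
          refine Finset.sum_le_sum fun s _ => ?_
          exact mul_le_mul_of_nonneg_left (abs_add_le _ _) hγ0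
      _ = γ * (∑ s, |(M' *ᵥ (fun u => d' u - d u)) s| + ∑ s, |((M' - M) *ᵥ d) s|) := by
          rw [mul_add, Finset.mul_sum, Finset.mul_sum, ← Finset.sum_add_distrib]
          exact Finset.sum_congr rfl fun s _ => by ring
      _ ≤ γ * (∑ s, |d' s - d s| + 2 * ∑ s, d s * DTV pol' pol s) := by
          refine mul_le_mul_of_nonneg_left ?_ hγ0
          exact add_le_add hcontr hB
      _ = γ * ∑ s, |d' s - d s| + γ * (2 * ∑ s, d s * DTV pol' pol s) := by ring
  linarith

end tv

/-- **Corollary 1.** For any two policies, with `ε^{π'} = max_s |E_{a∼π'}[A^π(s,a)]|`,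
`J(π') - J(π) ≥ (1/(1-γ)) E_{s∼d^π, a∼π'}[A^π(s,a) - (2γε^{π'}/(1-γ)) D_TV(π'‖π)[s]]`. -/
theorem policy_improvement_lower_bound
    [Fintype S] [DecidableEq S] [Nonempty S] [Fintype A] [Nonempty A]
    (γ : ℝ) (hγ0 : 0 ≤ γ) (hγ1 : γ < 1)
    (P : S → A → S → ℝ) (hP0 : ∀ s a s', 0 ≤ P s a s')
    (hP1 : ∀ s a, (∑ s', P s a s') = 1)
    (μ : S → ℝ) (hμ0 : ∀ s, 0 ≤ μ s) (hμ1 : (∑ s, μ s) = 1)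
    (R : S → A → S → ℝ)
    (pol pol' : S → A → ℝ)
    (hpol0 : ∀ s a, 0 ≤ pol s a) (hpol1 : ∀ s, (∑ a, pol s a) = 1)
    (hpol'0 : ∀ s a, 0 ≤ pol' s a) (hpol'1 : ∀ s, (∑ a, pol' s a) = 1)
    (V : S → ℝ)
    (hV : ∀ s, V s = ∑ a, pol s a * (∑ s', P s a s' * (R s a s' + γ * V s'))) :
    Jret γ P R μ pol' - Jret γ P R μ pol
      ≥ (1 / (1 - γ)) * ∑ s, dFut γ P μ pol s *
          (∑ a, pol' s a *
            (Adv γ P R V s a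
              - 2 * γ * (⨆ t, |∑ a', pol' t a' * Adv γ P R V t a'|) / (1 - γ)
                  * DTV pol' pol s)) := by
  have hpos : (0 : ℝ) < 1 - γ := by linarith
  have hne : (1 : ℝ) - γ ≠ 0 := ne_of_gt hpos
  set d := dFut γ P μ pol with hdd
  set d' := dFut γ P μ pol' with hdd'
  set g : S → ℝ := fun s => ∑ a, pol' s a * Adv γ P R V s a with hg
  set ε : ℝ := ⨆ t, |∑ a', pol' t a' * Adv γ P R V t a'| with hε
  have hεg : ε = ⨆ t, |g t| := rfl
  set c : ℝ := 2 * γ * ε / (1 - γ) with hc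
  have hd0 : ∀ s, 0 ≤ d s := fun s => dFut_nonneg hγ1.le hP0 hγ0 hμ0 hpol0 s
  -- sup facts
  have hbdd : BddAbove (Set.range fun t => |g t|) :=
    Set.Finite.bddAbove (Set.finite_range _)
  have hεb : ∀ s, |g s| ≤ ε := fun s => by
    rw [hεg]; exact le_ciSup hbdd s
  have hε0 : 0 ≤ ε := le_trans (abs_nonneg _) (hεb (Classical.arbitrary S))
  -- PDL for pol'
  have hpdl' := pdl hγ0 hγ1 hP0 hP1 hμ0 hμ1 R hpol'0 hpol'1 V
  -- pol has zero advantage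
  have hzero : ∀ s, ∑ a, pol s a * Adv γ P R V s a = 0 := by
    intro s
    simp only [Adv, mul_sub]
    rw [Finset.sum_sub_distrib, ← Finset.sum_mul, hpol1, one_mul, ← hV s, sub_self]
  have hpdl := pdl hγ0 hγ1 hP0 hP1 hμ0 hμ1 R hpol0 hpol1 V
  simp_rw [hzero, mul_zero, Finset.sum_const_zero] at hpdl
  -- J(π) = ⟨μ, V⟩
  have hJπ : Jret γ P R μ pol = ∑ s, μ s * V s := by
    have h := hpdl.symm
    have : (1 - γ) * (Jret γ P R μ pol - ∑ s, μ s * V s) = 0 := by linarith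
    rcases mul_eq_zero.mp this with h1 | h1
    · exact absurd h1 hne
    · linarith
  -- difference formula
  have hdiff : Jret γ P R μ pol' - Jret γ P R μ pol = (1 / (1 - γ)) * ∑ s, d' s * g s := by
    rw [hJπ, hpdl']
    field_simp
  -- simplify RHS inner sum
  have hinner : ∀ s, ∑ a, pol' s a * (Adv γ P R V s a - c * DTV pol' pol s)
      = g s - c * DTV pol' pol s := by
    intro s
    simp only [mul_sub]
    rw [Finset.sum_sub_distrib, ← Finset.sum_mul, hpol'1, one_mul]
  have hRHS : ∑ s, d s * (∑ a, pol' s a * (Adv γ P R V s a - c * DTV pol' pol s))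
      = ∑ s, d s * g s - c * ∑ s, d s * DTV pol' pol s := by
    simp_rw [hinner, mul_sub]
    rw [Finset.sum_sub_distrib, Finset.mul_sum]
    congr 1
    exact Finset.sum_congr rfl fun s _ => by ring
  -- key inequality
  have hshift := shift_bound hγ0 hγ1 hP0 hP1 hμ0 hμ1 hpol0 hpol1 hpol'0 hpol'1 (pol := pol) (pol' := pol')
  set L : ℝ := ∑ s, |d' s - d s| with hL
  set T : ℝ := ∑ s, d s * DTV pol' pol s with hT
  have hgap : ∑ s, d s * g s - ∑ s, d' s * g s ≤ ε * L := by
    have h1 : ∑ s, d s * g s - ∑ s, d' s * g s = ∑ s, (d s - d' s) * g s := by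
      rw [← Finset.sum_sub_distrib]
      exact Finset.sum_congr rfl fun s _ => by ring
    rw [h1]
    calc ∑ s, (d s - d' s) * g s ≤ ∑ s, |(d s - d' s) * g s| :=
          Finset.sum_le_sum fun s _ => le_abs_self _
      _ = ∑ s, |d' s - d s| * |g s| := by
          refine Finset.sum_congr rfl fun s _ => ?_
          rw [abs_mul, abs_sub_comm]
      _ ≤ ∑ s, |d' s - d s| * ε :=
          Finset.sum_le_sum fun s _ => mul_le_mul_of_nonneg_left (hεb s) (abs_nonneg _)
      _ = ε * L := by rw [← Finset.sum_mul, hL, mul_comm]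
  have hεL : ε * L ≤ c * T := by
    have h2 : ε * ((1 - γ) * L) ≤ ε * (γ * (2 * T)) :=
      mul_le_mul_of_nonneg_left hshift hε0
    rw [hc, div_mul_eq_mul_div, le_div_iff₀ hpos]
    nlinarith [h2]
  -- conclude
  rw [hdiff, hRHS, ge_iff_le]
  refine mul_le_mul_of_nonneg_left ?_ (by positivity)
  linarith
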